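/- Suppose Π and F_0 satisfy the regulator equations (A − BF)Π + B F_0 = Π A_0 and CΠ = C_0, where A − BF is Hurwitz. Then for the cascade system ẋ = (A − BF)x + B F_0 x_0, ẋ_0 = A_0 x_0, the output error e(t) = C x(t) − C_0 x_0(t) tends to 0 as t → ∞ for all initial conditions. -/

import Mathlib

open Matrix Filter

/-- All eigenvalues (over ℂ) have negative real part. -/
def Hurwitz {n : Type*} [Fintype n] [DecidableEq n] (M : Matrix n n ℝ) : Prop :=
  ∀ μ ∈ spectrum ℂ (M.map Complex.ofReal), μ.re < 0

section Aux

open NormedSpace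

attribute [local instance] Matrix.linftyOpNormedAddCommGroup Matrix.linftyOpNormedRing
  Matrix.linftyOpNormedAlgebra

/-- mulVec by a fixed vector, as a continuous linear map in the matrix argument. -/
noncomputable def mvCLM (𝕜 : Type*) [RCLike 𝕜] {k l : ℕ} (v : Fin l → 𝕜) :
    Matrix (Fin k) (Fin l) 𝕜 →L[𝕜] (Fin k → 𝕜) :=
  LinearMap.toContinuousLinearMap
    { toFun := fun M => M *ᵥ v
      map_add' := fun M N => Matrix.add_mulVec M N v
      map_smul' := fun c M => by simp [Matrix.smul_mulVec] }

@[simp] lemma mvCLM_apply {𝕜 : Type*} [RCLike 𝕜] {k l : ℕ} (v : Fin l → 𝕜)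
    (M : Matrix (Fin k) (Fin l) 𝕜) : mvCLM 𝕜 v M = M *ᵥ v := rfl

lemma real_decay {r : ℝ} (hr : r < 0) (j : ℕ) :
    Tendsto (fun t : ℝ => t ^ j * Real.exp (r * t)) atTop (nhds 0) := by
  have h1 : Tendsto (fun t : ℝ => (-r) * t) atTop atTop :=
    tendsto_id.const_mul_atTop (by linarith)
  have h2 := (Real.tendsto_pow_mul_exp_neg_atTop_nhds_zero j).comp h1
  have h3 := h2.mul_const ((-r)⁻¹ ^ j)
  rw [zero_mul] at h3
  refine h3.congr (fun t => ?_)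
  have hne : (-r) ≠ 0 := by linarith
  simp only [Function.comp_apply]
  rw [show -(-r * t) = r * t by ring, mul_pow, inv_pow]
  field_simp


lemma exp_mulVec_eventually_zero {k : ℕ} (M : Matrix (Fin k) (Fin k) ℂ) (μ : ℂ)
    (hre : μ.re < 0) (j : ℕ) (w : Fin k → ℂ)
    (hj : (M - μ • 1) ^ j *ᵥ w = 0) :
    Tendsto (fun t : ℝ => exp ((t : ℂ) • M) *ᵥ w) atTop (nhds 0) := by
  set N : Matrix (Fin k) (Fin k) ℂ := M - μ • 1 with hN
  have hNw : ∀ i, j ≤ i → N ^ i *ᵥ w = 0 := by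
    intro i hi
    rw [show i = (i - j) + j from (Nat.sub_add_cancel hi).symm, pow_add,
      ← Matrix.mulVec_mulVec, hj, Matrix.mulVec_zero]
  have hexp : ∀ t : ℝ, exp ((t : ℂ) • M) *ᵥ w =
      ∑ i ∈ Finset.range j,
        (Complex.exp ((t : ℂ) * μ) * ((t : ℂ) ^ i * ((Nat.factorial i : ℂ))⁻¹)) • (N ^ i *ᵥ w) := by
    intro t
    have hsplit : (t : ℂ) • M = ((t : ℂ) * μ) • (1 : Matrix (Fin k) (Fin k) ℂ) + (t : ℂ) • N := by
      rw [← smul_smul, ← smul_add]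
      congr 1
      simp [hN]
    have hcomm : Commute (((t : ℂ) * μ) • (1 : Matrix (Fin k) (Fin k) ℂ)) ((t : ℂ) • N) := by
      apply Commute.smul_left
      apply Commute.smul_right
      exact Commute.one_left _
    rw [hsplit, Matrix.exp_add_of_commute _ _ hcomm]
    have h1 : exp (((t : ℂ) * μ) • (1 : Matrix (Fin k) (Fin k) ℂ))
        = Complex.exp ((t : ℂ) * μ) • (1 : Matrix (Fin k) (Fin k) ℂ) := by
      rw [← Algebra.algebraMap_eq_smul_one, ← Algebra.algebraMap_eq_smul_one,
        Complex.exp_eq_exp_ℂ, algebraMap_exp_comm]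
      congr 1
    have h2 : exp ((t : ℂ) • N) *ᵥ w =
        ∑ i ∈ Finset.range j, (((Nat.factorial i : ℂ))⁻¹ * (t : ℂ) ^ i) • (N ^ i *ᵥ w) := by
      have hsum := expSeries_summable' (𝕂 := ℂ) ((t : ℂ) • N)
      have hmap := (mvCLM ℂ (k := k) w).map_tsum hsum
      have hterm : ∀ i : ℕ, (mvCLM ℂ (k := k) w) (((Nat.factorial i : ℂ))⁻¹ • ((t : ℂ) • N) ^ i)
          = (((Nat.factorial i : ℂ))⁻¹ * (t : ℂ) ^ i) • (N ^ i *ᵥ w) := by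
        intro i
        rw [_root_.map_smul, mvCLM_apply, smul_pow, Matrix.smul_mulVec, smul_smul]
      have heq : exp ((t : ℂ) • N) *ᵥ w
          = ∑' i : ℕ, (((Nat.factorial i : ℂ))⁻¹ * (t : ℂ) ^ i) • (N ^ i *ᵥ w) := by
        rw [exp_eq_tsum ℂ]
        show (mvCLM ℂ (k := k) w) (∑' i : ℕ, ((Nat.factorial i : ℂ))⁻¹ • ((t : ℂ) • N) ^ i) = _
        rw [hmap, tsum_congr hterm]
      rw [heq]
      refine tsum_eq_sum fun i hi => ?_
      rw [hNw i (by simpa using hi), smul_zero]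
    rw [h1, smul_mul_assoc, Matrix.one_mul, Matrix.smul_mulVec, h2, Finset.smul_sum]
    refine Finset.sum_congr rfl fun i _ => ?_
    rw [smul_smul]
    congr 1
    ring_nf
  have hterm : ∀ i ∈ Finset.range j, Tendsto
      (fun t : ℝ => (Complex.exp ((t : ℂ) * μ) * ((t : ℂ) ^ i * ((Nat.factorial i : ℂ))⁻¹)) • (N ^ i *ᵥ w))
      atTop (nhds 0) := by
    intro i _
    have hsc : Tendsto (fun t : ℝ => Complex.exp ((t : ℂ) * μ) * ((t : ℂ) ^ i * ((Nat.factorial i : ℂ))⁻¹))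
        atTop (nhds 0) := by
      rw [tendsto_zero_iff_norm_tendsto_zero]
      have hdec := (real_decay hre i).mul_const ((Nat.factorial i : ℝ))⁻¹
      rw [zero_mul] at hdec
      refine hdec.congr' ?_
      filter_upwards [eventually_ge_atTop (0 : ℝ)] with t ht
      rw [norm_mul, norm_mul, norm_pow, norm_inv, Complex.norm_exp]
      simp only [Complex.mul_re, Complex.ofReal_re, Complex.ofReal_im, zero_mul, sub_zero,
        Complex.norm_real, Complex.norm_natCast, Real.norm_eq_abs, abs_of_nonneg ht]
      ring
    have := hsc.smul_const (N ^ i *ᵥ w)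
    rwa [zero_smul] at this
  have hsum := tendsto_finset_sum (Finset.range j) hterm
  rw [Finset.sum_const_zero] at hsum
  exact hsum.congr fun t => (hexp t).symm


lemma key_complex {k : ℕ} (M : Matrix (Fin k) (Fin k) ℂ)
    (hM : ∀ μ ∈ spectrum ℂ M, μ.re < 0) (v : Fin k → ℂ) :
    Tendsto (fun t : ℝ => exp ((t : ℂ) • M) *ᵥ v) atTop (nhds 0) := by
  set f : Module.End ℂ (Fin k → ℂ) := Matrix.toLinAlgEquiv' M with hf
  have hv : v ∈ ⨆ μ : ℂ, f.maxGenEigenspace μ := by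
    rw [Module.End.iSup_maxGenEigenspace_eq_top]; trivial
  refine Submodule.iSup_induction (motive := fun w =>
      Tendsto (fun t : ℝ => exp ((t : ℂ) • M) *ᵥ w) atTop (nhds 0)) _ hv ?_ ?_ ?_
  · intro μ w hw
    rcases eq_or_ne w 0 with rfl | hw0
    · simpa [Matrix.mulVec_zero] using (tendsto_const_nhds :
        Tendsto (fun _ : ℝ => (0 : Fin k → ℂ)) atTop (nhds 0))
    obtain ⟨j, hj⟩ := (Module.End.mem_maxGenEigenspace f μ w).mp hw
    -- translate to matrices
    have hmat : ∀ i : ℕ, ((M - μ • 1) ^ i) *ᵥ w = ((f - μ • 1) ^ i) w := by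
      intro i
      have : Matrix.toLinAlgEquiv' ((M - μ • 1) ^ i) = (f - μ • 1) ^ i := by
        rw [map_pow, map_sub, _root_.map_smul, _root_.map_one, hf]
      rw [← this, Matrix.toLinAlgEquiv'_apply]
    have hjm : ((M - μ • 1) ^ j) *ᵥ w = 0 := by rw [hmat]; exact hj
    -- μ is an eigenvalue, hence in the spectrum
    have hre : μ.re < 0 := by
      have hex : ∃ i : ℕ, ((M - μ • 1) ^ i) *ᵥ w = 0 := ⟨j, hjm⟩
      classical
      set i0 := Nat.find hex with hi0
      have hi0z : ((M - μ • 1) ^ i0) *ᵥ w = 0 := Nat.find_spec hex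
      have hi0ne : i0 ≠ 0 := by
        intro h
        rw [h, pow_zero, Matrix.one_mulVec] at hi0z
        exact hw0 hi0z
      set u := ((M - μ • 1) ^ (i0 - 1)) *ᵥ w with hu
      have hune : u ≠ 0 := by
        intro h
        exact Nat.find_min hex (Nat.sub_lt (Nat.pos_of_ne_zero hi0ne) one_pos) h
      have hNu : (M - μ • 1) *ᵥ u = 0 := by
        rw [hu, Matrix.mulVec_mulVec, ← pow_succ', Nat.sub_add_cancel
          (Nat.one_le_iff_ne_zero.mpr hi0ne)]
        exact hi0z
      have hMu : M *ᵥ u = μ • u := by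
        have := hNu
        rw [Matrix.sub_mulVec, sub_eq_zero] at this
        rw [this, Matrix.smul_mulVec, Matrix.one_mulVec]
      have heig : f.HasEigenvalue μ :=
        Module.End.hasEigenvalue_of_hasEigenvector ⟨Module.End.mem_eigenspace_iff.mpr
          (by rw [hf, Matrix.toLinAlgEquiv'_apply, hMu]), hune⟩
      have hspec : μ ∈ spectrum ℂ f := Module.End.hasEigenvalue_iff_mem_spectrum.mp heig
      rw [hf, AlgEquiv.spectrum_eq] at hspec
      exact hM μ hspec
    exact exp_mulVec_eventually_zero M μ hre j w hjm
  · simpa [Matrix.mulVec_zero] using (tendsto_const_nhds :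
      Tendsto (fun _ : ℝ => (0 : Fin k → ℂ)) atTop (nhds 0))
  · intro a b ha hb
    have := ha.add hb
    rw [add_zero] at this
    exact this.congr fun t => (Matrix.mulVec_add _ _ _).symm


/-- transfer from ℂ to ℝ -/
lemma exp_mulVec_tendsto_real {k : ℕ} (M : Matrix (Fin k) (Fin k) ℝ) (hH : Hurwitz M)
    (c : Fin k → ℝ) :
    Tendsto (fun t : ℝ => exp (t • M) *ᵥ c) atTop (nhds 0) := by
  have hkey := key_complex (M.map Complex.ofReal) hH (fun i => (c i : ℂ))
  have hmapexp : ∀ t : ℝ, (exp (t • M)).map Complex.ofReal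
      = exp ((t : ℂ) • M.map Complex.ofReal) := by
    intro t
    have hcont : Continuous fun X : Matrix (Fin k) (Fin k) ℝ => X.map Complex.ofReal := by
      exact continuous_id.matrix_map Complex.continuous_ofReal
    have h1 := map_exp (Complex.ofRealHom.mapMatrix (m := Fin k)) hcont (t • M)
    have h2 : (Complex.ofRealHom.mapMatrix (m := Fin k)) (t • M)
        = (t : ℂ) • M.map Complex.ofReal := by
      ext i j
      simp [Matrix.map_apply]
    have h3 : (exp ((t : ℂ) • M.map Complex.ofReal) : Matrix (Fin k) (Fin k) ℂ)
        = exp ((t : ℂ) • M.map Complex.ofReal) := by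
      rfl
    calc (exp (t • M)).map Complex.ofReal
        = (Complex.ofRealHom.mapMatrix (m := Fin k)) (exp (t • M)) := rfl
      _ = exp ((Complex.ofRealHom.mapMatrix (m := Fin k)) (t • M)) := h1
      _ = exp ((t : ℂ) • M.map Complex.ofReal) := by rw [h2, ← h3]
  have hmv : ∀ t : ℝ, (fun i => ((exp (t • M) *ᵥ c) i : ℂ))
      = exp ((t : ℂ) • M.map Complex.ofReal) *ᵥ (fun i => (c i : ℂ)) := by
    intro t
    funext i
    rw [← hmapexp t]
    simp [Matrix.mulVec, dotProduct, Matrix.map_apply]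
  rw [tendsto_pi_nhds]
  intro i
  have h4 : Tendsto (fun t : ℝ => (exp ((t : ℂ) • M.map Complex.ofReal)
      *ᵥ (fun i => (c i : ℂ))) i) atTop (nhds 0) := by
    have := (continuous_apply i).tendsto (0 : Fin k → ℂ)
    exact this.comp hkey
  have h5 : Tendsto (fun t : ℝ => ((exp (t • M) *ᵥ c) i : ℂ)) atTop (nhds 0) := by
    refine h4.congr fun t => ?_
    rw [← hmv t]
  have h6 := (Complex.continuous_re.tendsto 0).comp h5
  simpa [Function.comp_def] using h6

/-- Solutions of the linear ODE are given by the matrix exponential (for `t ≥ 0`). -/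
lemma ode_solution_eq_exp {k : ℕ} (M : Matrix (Fin k) (Fin k) ℝ) (y : ℝ → Fin k → ℝ)
    (hy : ∀ t, HasDerivAt y (M *ᵥ y t) t) :
    ∀ t, 0 ≤ t → y t = exp (t • M) *ᵥ y 0 := by
  intro b hb
  set L := LinearMap.toContinuousLinearMap (M.mulVecLin) with hL
  set g : ℝ → Fin k → ℝ := fun s => exp (s • M) *ᵥ y 0 with hg
  have hgder : ∀ t : ℝ, HasDerivAt g (M *ᵥ g t) t := by
    intro t
    have h1 := hasDerivAt_exp_smul_const' (𝕂 := ℝ) M t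
    have h2 := (mvCLM ℝ (y 0)).hasFDerivAt.comp_hasDerivAt t h1
    have h3 : (mvCLM ℝ (y 0)) (M * exp (t • M)) = M *ᵥ g t := by
      rw [mvCLM_apply, ← Matrix.mulVec_mulVec]
    rw [← h3]
    exact h2
  have hlip : ∀ _ : ℝ, LipschitzWith ‖L‖₊ (fun z : Fin k → ℝ => M *ᵥ z) := fun _ => L.lipschitz
  have hycont : Continuous y := Differentiable.continuous (fun t => (hy t).differentiableAt)
  have hgcont : Continuous g :=
    Differentiable.continuous (fun t => (hgder t).differentiableAt)
  have ha : y 0 = g 0 := by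
    rw [hg]
    simp only [zero_smul, exp_zero, Matrix.one_mulVec]
  have huniq := ODE_solution_unique (v := fun _ z => M *ᵥ z) (K := ‖L‖₊) (a := 0) (b := b) hlip
    hycont.continuousOn (fun t _ => (hy t).hasDerivWithinAt)
    hgcont.continuousOn (fun t _ => (hgder t).hasDerivWithinAt) ha
  exact huniq ⟨hb, le_rfl⟩


lemma tendsto_of_ode {k : ℕ} (M : Matrix (Fin k) (Fin k) ℝ) (hH : Hurwitz M)
    (y : ℝ → Fin k → ℝ) (hy : ∀ t, HasDerivAt y (M *ᵥ y t) t) :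
    Tendsto y atTop (nhds 0) := by
  have h1 := exp_mulVec_tendsto_real M hH (y 0)
  refine h1.congr' ?_
  filter_upwards [eventually_ge_atTop (0 : ℝ)] with t ht
  exact (ode_solution_eq_exp M y hy t ht).symm

end Aux

/-- If Π, F₀ satisfy the regulator equations (A − BF)Π + BF₀ = ΠA₀,
CΠ = C₀ with A − BF Hurwitz, then for the cascade ẋ = (A − BF)x + BF₀x₀,
ẋ₀ = A₀x₀, the error e(t) = Cx(t) − C₀x₀(t) → 0 as t → ∞ for all initial
conditions. -/
theorem stmt14 {n m p n0 : ℕ}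
    (A : Matrix (Fin n) (Fin n) ℝ) (B : Matrix (Fin n) (Fin m) ℝ)
    (C : Matrix (Fin p) (Fin n) ℝ)
    (A0 : Matrix (Fin n0) (Fin n0) ℝ) (C0 : Matrix (Fin p) (Fin n0) ℝ)
    (F : Matrix (Fin m) (Fin n) ℝ)
    (P : Matrix (Fin n) (Fin n0) ℝ) (F0 : Matrix (Fin m) (Fin n0) ℝ)
    (hH : Hurwitz (A - B * F))
    (hreg : (A - B * F) * P + B * F0 = P * A0) (hC : C * P = C0)
    (x : ℝ → Fin n → ℝ) (x0 : ℝ → Fin n0 → ℝ)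
    (hx0 : ∀ t, HasDerivAt x0 (A0 *ᵥ x0 t) t)
    (hx : ∀ t, HasDerivAt x ((A - B * F) *ᵥ x t + B *ᵥ (F0 *ᵥ x0 t)) t) :
    Tendsto (fun t => C *ᵥ x t - C0 *ᵥ x0 t) atTop (nhds 0) := by
  have hder : ∀ t, HasDerivAt (fun s => x s - P *ᵥ x0 s)
      ((A - B * F) *ᵥ (x t - P *ᵥ x0 t)) t := by
    intro t
    have h0 : HasDerivAt (fun s => P *ᵥ x0 s) (P *ᵥ (A0 *ᵥ x0 t)) t :=
      (LinearMap.toContinuousLinearMap P.mulVecLin).hasFDerivAt.comp_hasDerivAt t (hx0 t)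
    have hsub := (hx t).sub h0
    refine hsub.congr_deriv ?_
    rw [Matrix.mulVec_sub, Matrix.mulVec_mulVec, Matrix.mulVec_mulVec, Matrix.mulVec_mulVec,
      ← hreg, Matrix.add_mulVec]
    abel
  have hten : Tendsto (fun t => x t - P *ᵥ x0 t) atTop (nhds 0) :=
    tendsto_of_ode _ hH _ hder
  have hCC : (fun t => C *ᵥ x t - C0 *ᵥ x0 t) = fun t => C *ᵥ (x t - P *ᵥ x0 t) := by
    funext t
    rw [Matrix.mulVec_sub, Matrix.mulVec_mulVec, hC]
  rw [hCC]
  have hcont : Continuous fun z : Fin n → ℝ => C *ᵥ z :=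
    (LinearMap.toContinuousLinearMap C.mulVecLin).continuous
  have hfin := (hcont.tendsto 0).comp hten
  simpa [Matrix.mulVec_zero, Function.comp_def] using hfin
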